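/- Let α, β be nonzero power sums in E and let t > 0 be a real number. Then there exists a power sum η ∈ E_ℚ (with positive rational roots) such that ℓ(α − η·β) < t. -/

import Mathlib

open scoped BigOperators

/-- `α` belongs to `E_ℚ`: it is a power sum `n ↦ ∑ cᵢ aᵢⁿ` with nonzero rational
coefficients `cᵢ` and distinct positive *rational* roots `aᵢ` (the zero function,
given by the empty sum, is allowed). -/
def IsPowerSumQ (α : ℕ → ℚ) : Prop :=
  ∃ (s : Finset ℚ) (c : ℚ → ℚ),
    (∀ a ∈ s, c a ≠ 0) ∧ (∀ a ∈ s, 0 < a) ∧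
    ∀ n : ℕ, α n = ∑ a ∈ s, c a * a ^ n

/-- `α` belongs to `E`: it is a power sum `n ↦ ∑ cᵢ aᵢⁿ` with nonzero rational
coefficients `cᵢ` and distinct positive *integer* roots `aᵢ` (the zero function,
given by the empty sum, is allowed). -/
def IsPowerSumE (α : ℕ → ℚ) : Prop :=
  ∃ (s : Finset ℚ) (c : ℚ → ℚ),
    (∀ a ∈ s, c a ≠ 0) ∧ (∀ a ∈ s, ∃ m : ℕ, 0 < m ∧ (m : ℚ) = a) ∧
    ∀ n : ℕ, α n = ∑ a ∈ s, c a * a ^ n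

/-- `HasEll α l` : `α` is a power sum in `E_ℚ` (nonzero rational coefficients,
distinct positive rational roots) and `l = ℓ(α)` is the maximal root in its
normalized representation; for `α = 0` (empty representation) this gives `l = 0`. -/
def HasEll (α : ℕ → ℚ) (l : ℚ) : Prop :=
  ∃ (s : Finset ℚ) (c : ℚ → ℚ),
    (∀ a ∈ s, c a ≠ 0) ∧ (∀ a ∈ s, 0 < a) ∧
    (∀ n : ℕ, α n = ∑ a ∈ s, c a * a ^ n) ∧
    l = WithBot.unbotD 0 s.max

/-- Value of the finite continued fraction `[u₀; u₁, …, u_R] = u₀ + 1/(u₁ + 1/(⋯ + 1/u_R))`. -/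
def cfEval : List ℚ → ℚ
  | [] => 0
  | [a] => a
  | a :: b :: l => a + (cfEval (b :: l))⁻¹

/-- All the "tails" `[uᵢ; …, u_R]` (for `i ≥ 1`) of the continued fraction
`[u₀; u₁, …, u_R]` have nonzero value, i.e. no division by zero occurs when
evaluating the continued fraction. -/
def CFTailsNonzero : List ℚ → Prop
  | [] => True
  | [_] => True
  | _ :: b :: l => cfEval (b :: l) ≠ 0 ∧ CFTailsNonzero (b :: l)

/-- `u` is the canonical continued fraction expansion of the rational `x`:
`x = [u₀; u₁, …, u_R]` with the `uᵢ` integers, `uᵢ ≥ 1` for `i ≥ 1`, and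
`u_R ≥ 2` if `R ≥ 1`. -/
def IsCanonCF (x : ℚ) (u : List ℤ) : Prop :=
  u ≠ [] ∧ (∀ a ∈ u.tail, 1 ≤ a) ∧ (2 ≤ u.length → 2 ≤ u.getLastD 0) ∧
    cfEval (u.map fun a => (a : ℚ)) = x

/-- The canonical continued fraction expansion of the rational `x` has `m`
partial quotients (so `x = [u₀; u₁, …, u_R]` with `m = R + 1`). -/
def HasCFLength (x : ℚ) (m : ℕ) : Prop :=
  ∃ u : List ℤ, IsCanonCF x u ∧ u.length = m
open scoped Pointwise

noncomputable def phiPS (n : ℕ) : MonoidAlgebra ℚ ℚ →ₐ[ℚ] ℚ :=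
  MonoidAlgebra.lift ℚ ℚ ℚ (powMonoidHom n)

lemma phiPS_apply (n : ℕ) (g : MonoidAlgebra ℚ ℚ) :
    phiPS n g = ∑ a ∈ g.coeff.support, g.coeff a * a ^ n := by
  rw [phiPS, MonoidAlgebra.lift_apply]
  simp [Finsupp.sum, powMonoidHom_apply, smul_eq_mul]

lemma phiPS_single (n : ℕ) (a c : ℚ) : phiPS n (MonoidAlgebra.single a c) = c * a ^ n := by
  rw [phiPS, MonoidAlgebra.lift_single]
  simp [powMonoidHom_apply, smul_eq_mul]

def PosSupp (g : MonoidAlgebra ℚ ℚ) : Prop := ∀ a ∈ g.coeff.support, (0:ℚ) < a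
def BddSupp (B : ℚ) (g : MonoidAlgebra ℚ ℚ) : Prop := ∀ a ∈ g.coeff.support, a ≤ B

lemma PosSupp.mul {g h : MonoidAlgebra ℚ ℚ} (hg : PosSupp g) (hh : PosSupp h) :
    PosSupp (g * h) := by
  intro a ha
  rcases Finset.mem_mul.mp (MonoidAlgebra.support_coeff_mul_subset g h ha) with ⟨x, hx, y, hy, rfl⟩
  exact mul_pos (hg x hx) (hh y hy)

lemma PosSupp.neg {g : MonoidAlgebra ℚ ℚ} (hg : PosSupp g) : PosSupp (-g) := by
  intro a ha; rw [MonoidAlgebra.coeff_neg, Finsupp.support_neg] at ha; exact hg a ha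

lemma PosSupp.pow {g : MonoidAlgebra ℚ ℚ} (hg : PosSupp g) (m : ℕ) : PosSupp (g ^ m) := by
  induction m with
  | zero =>
    intro a ha
    rw [pow_zero, MonoidAlgebra.one_def, MonoidAlgebra.coeff_single] at ha
    have := Finsupp.support_single_subset ha
    simp only [Finset.mem_singleton] at this
    subst this; norm_num
  | succ k ih => rw [pow_succ]; exact ih.mul hg

lemma BddSupp.mul {g h : MonoidAlgebra ℚ ℚ} {B C : ℚ} (hg : BddSupp B g) (hh : BddSupp C h)
    (hph : PosSupp h) (hB : 0 ≤ B) : BddSupp (B * C) (g * h) := by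
  intro a ha
  rcases Finset.mem_mul.mp (MonoidAlgebra.support_coeff_mul_subset g h ha) with ⟨x, hx, y, hy, rfl⟩
  exact mul_le_mul (hg x hx) (hh y hy) (le_of_lt (hph y hy)) hB

lemma BddSupp.neg {g : MonoidAlgebra ℚ ℚ} {B : ℚ} (hg : BddSupp B g) : BddSupp B (-g) := by
  intro a ha; rw [MonoidAlgebra.coeff_neg, Finsupp.support_neg] at ha; exact hg a ha

lemma BddSupp.pow {g : MonoidAlgebra ℚ ℚ} {B : ℚ} (hg : BddSupp B g) (hp : PosSupp g)
    (hB : 0 ≤ B) (m : ℕ) : BddSupp (B ^ m) (g ^ m) := by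
  induction m with
  | zero =>
    intro a ha
    rw [pow_zero, MonoidAlgebra.one_def, MonoidAlgebra.coeff_single] at ha
    have := Finsupp.support_single_subset ha
    simp only [Finset.mem_singleton] at this
    subst this; simp
  | succ k ih => rw [pow_succ, pow_succ]; exact ih.mul hg hp (pow_nonneg hB k)

lemma PosSupp.single {a : ℚ} (c : ℚ) (ha : 0 < a) : PosSupp (MonoidAlgebra.single a c) := by
  intro x hx
  rw [MonoidAlgebra.coeff_single] at hx
  have := Finsupp.support_single_subset hx
  simp only [Finset.mem_singleton] at this
  subst this; exact ha

lemma exists_finsupp_rep (s : Finset ℚ) (c : ℚ → ℚ) :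
    ∃ g : MonoidAlgebra ℚ ℚ, g.coeff.support ⊆ s ∧
      ∀ n : ℕ, phiPS n g = ∑ a ∈ s, c a * a ^ n := by
  refine ⟨MonoidAlgebra.ofCoeff (Finsupp.onFinset s (fun a => if a ∈ s then c a else 0)
    (fun a h => by by_contra hs; simp [hs] at h)), by rw [MonoidAlgebra.coeff_ofCoeff]; exact Finsupp.support_onFinset_subset, fun n => ?_⟩
  rw [phiPS_apply, MonoidAlgebra.coeff_ofCoeff]
  rw [Finset.sum_subset Finsupp.support_onFinset_subset
    (fun a _ hna => by rw [Finsupp.notMem_support_iff.mp hna, zero_mul])]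
  exact Finset.sum_congr rfl fun a ha => by simp [MonoidAlgebra.coeff_ofCoeff, Finsupp.onFinset_apply, ha]
open scoped BigOperators Pointwise

/-- **Lemma 1.** Let `α, β ∈ E` be nonzero and let `t > 0`. Then there exists
`η ∈ E_ℚ` such that `ℓ(α - ηβ) < t`. -/
theorem exists_eta_with_small_ell
    (α β : ℕ → ℚ) (hα : IsPowerSumE α) (hβ : IsPowerSumE β)
    (hα0 : α ≠ 0) (hβ0 : β ≠ 0) (t : ℝ) (ht : 0 < t) :
    ∃ η : ℕ → ℚ, IsPowerSumQ η ∧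
      ∃ l : ℚ, HasEll (α - η * β) l ∧ (l : ℝ) < t := by
  obtain ⟨sα, cα, hcα, hrα, hαrep⟩ := hα
  obtain ⟨sβ, cβ, hcβ, hrβ, hβrep⟩ := hβ
  have hsα : sα.Nonempty := by
    rw [Finset.nonempty_iff_ne_empty]; rintro rfl
    exact hα0 (funext fun n => by simp [hαrep n])
  have hsβ : sβ.Nonempty := by
    rw [Finset.nonempty_iff_ne_empty]; rintro rfl
    exact hβ0 (funext fun n => by simp [hβrep n])
  have hposα : ∀ a ∈ sα, (0:ℚ) < a := fun a ha => by
    obtain ⟨m, hm, rfl⟩ := hrα a ha; exact_mod_cast hm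
  have hposβ : ∀ a ∈ sβ, (0:ℚ) < a := fun a ha => by
    obtain ⟨m, hm, rfl⟩ := hrβ a ha; exact_mod_cast hm
  set b := sβ.max' hsβ with hb
  have hbmem : b ∈ sβ := sβ.max'_mem hsβ
  have hbpos : 0 < b := hposβ b hbmem
  have hcb : cβ b ≠ 0 := hcβ b hbmem
  set A := sα.max' hsα with hA
  have hApos : 0 < A := hposα _ (sα.max'_mem hsα)
  -- gα
  obtain ⟨gα, hgαsupp, hgαrep⟩ := exists_finsupp_rep sα cα
  have hgαpos : PosSupp gα := fun a ha => hposα a (hgαsupp ha)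
  have hgαbdd : BddSupp A gα := fun a ha => sα.le_max' a (hgαsupp ha)
  -- gδ
  set e := sβ.erase b with he
  obtain ⟨gδ, hgδsupp, hgδrep⟩ :=
    exists_finsupp_rep (e.image (· / b)) (fun x => cβ (x * b) / cβ b)
  have hδval : ∀ n, phiPS n gδ = ∑ a ∈ e, (cβ a / cβ b) * (a / b) ^ n := by
    intro n
    rw [hgδrep n, Finset.sum_image (fun x _ y _ hxy => by
      field_simp at hxy; exact hxy)]
    exact Finset.sum_congr rfl fun a _ => by
      rw [div_mul_cancel₀ _ (ne_of_gt hbpos)]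
  have hQex : ∃ Q : ℚ, 0 < Q ∧ Q < 1 ∧ ∀ a ∈ e, a / b ≤ Q := by
    rcases e.eq_empty_or_nonempty with h | h
    · exact ⟨1/2, by norm_num, by norm_num, by simp [h]⟩
    · have hmem : e.max' h ∈ sβ := Finset.mem_of_mem_erase (e.max'_mem h)
      refine ⟨e.max' h / b, div_pos (hposβ _ hmem) hbpos, ?_, ?_⟩
      · rw [div_lt_one hbpos]
        exact lt_of_le_of_ne (sβ.le_max' _ hmem) (Finset.ne_of_mem_erase (e.max'_mem h))
      · intro a ha
        have := e.le_max' a ha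
        gcongr
  obtain ⟨Q, hQ0, hQ1, hQle⟩ := hQex
  have hgδpos : PosSupp gδ := fun a ha => by
    obtain ⟨x, hx, rfl⟩ := Finset.mem_image.mp (hgδsupp ha)
    exact div_pos (hposβ x (Finset.mem_of_mem_erase hx)) hbpos
  have hgδbdd : BddSupp Q gδ := fun a ha => by
    obtain ⟨x, hx, rfl⟩ := Finset.mem_image.mp (hgδsupp ha)
    exact hQle x hx
  -- β identity
  have hβid : ∀ n, β n = cβ b * b ^ n * (1 + phiPS n gδ) := by
    intro n
    rw [hβrep n, hδval n, ← Finset.add_sum_erase _ _ hbmem, mul_add, mul_one, Finset.mul_sum]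
    congr 1
    refine Finset.sum_congr rfl fun a ha => ?_
    have hbn : (b : ℚ) ^ n ≠ 0 := pow_ne_zero n (ne_of_gt hbpos)
    rw [div_pow]; field_simp
  -- choose N
  have hA' : (0:ℝ) < (A:ℝ) := by exact_mod_cast hApos
  have hQ0' : (0:ℝ) < (Q:ℝ) := by exact_mod_cast hQ0
  have hQ1' : ((Q:ℝ)) < 1 := by exact_mod_cast hQ1
  obtain ⟨N, hN⟩ := exists_pow_lt_of_lt_one (div_pos ht hA') hQ1'
  have hbound : ((A * Q ^ (N + 1) : ℚ) : ℝ) < t := by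
    have h1 : (Q:ℝ) ^ (N + 1) ≤ (Q:ℝ) ^ N :=
      pow_le_pow_of_le_one hQ0'.le hQ1'.le (Nat.le_succ N)
    have h2 : (Q:ℝ) ^ N * (A:ℝ) < t := (lt_div_iff₀ hA').mp hN
    push_cast
    nlinarith
  -- η and residue
  set S : MonoidAlgebra ℚ ℚ := ∑ k ∈ Finset.range (N + 1), (-gδ) ^ k with hS
  set gη : MonoidAlgebra ℚ ℚ := MonoidAlgebra.single b⁻¹ (cβ b)⁻¹ * gα * S with hgη
  set gr : MonoidAlgebra ℚ ℚ := gα * (-gδ) ^ (N + 1) with hgr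
  have hSpos : PosSupp S := by
    intro a ha
    rw [hS, MonoidAlgebra.coeff_sum] at ha
    obtain ⟨k, _, hk2⟩ := Finset.mem_biUnion.mp (Finsupp.support_finset_sum ha)
    exact (hgδpos.neg.pow k) a hk2
  have hηpos : PosSupp gη :=
    ((PosSupp.single (cβ b)⁻¹ (inv_pos.mpr hbpos)).mul hgαpos).mul hSpos
  have hrpos : PosSupp gr := hgαpos.mul (hgδpos.neg.pow (N + 1))
  have hrbdd : BddSupp (A * Q ^ (N + 1)) gr :=
    hgαbdd.mul (hgδbdd.neg.pow hgδpos.neg hQ0.le (N + 1)) (hgδpos.neg.pow (N + 1)) hApos.le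
  have hres : ∀ n, α n - phiPS n gη * β n = phiPS n gr := by
    intro n
    set d := phiPS n gδ with hdd
    have hηn : phiPS n gη =
        (b⁻¹) ^ n * (cβ b)⁻¹ * phiPS n gα * ∑ k ∈ Finset.range (N + 1), (-d) ^ k := by
      rw [hgη, map_mul, map_mul, phiPS_single, hS, map_sum]
      simp only [map_pow, map_neg]
      ring
    have hgrn : phiPS n gr = phiPS n gα * (-d) ^ (N + 1) := by
      rw [hgr, map_mul, map_pow, map_neg]
    have hαn : α n = phiPS n gα := by rw [hgαrep n, hαrep n]
    set S' := ∑ k ∈ Finset.range (N + 1), (-d) ^ k with hS'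
    have hgeom : S' * (1 + d) = 1 - (-d) ^ (N + 1) := by
      have h := geom_sum_mul (-d) (N + 1)
      have h2 : S' * (1 + d) = -(S' * (-d - 1)) := by ring
      rw [h2, h]; ring
    rw [hβid n, hηn, hgrn, hαn]
    have hbn : (b : ℚ) ^ n ≠ 0 := pow_ne_zero n (ne_of_gt hbpos)
    have hkey : (b⁻¹) ^ n * (cβ b)⁻¹ * phiPS n gα * S' * (cβ b * b ^ n * (1 + d)) =
        phiPS n gα * (S' * (1 + d)) := by
      have h1 : b⁻¹ ^ n * b ^ n = 1 := by rw [← mul_pow, inv_mul_cancel₀ hbpos.ne', one_pow]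
      have h2 : (cβ b)⁻¹ * cβ b = 1 := inv_mul_cancel₀ hcb
      linear_combination (phiPS n gα * S' * (1 + d)) * ((cβ b)⁻¹ * cβ b) * h1 +
        (phiPS n gα * S' * (1 + d)) * h2
    rw [hkey, hgeom]
    ring
  refine ⟨fun n => phiPS n gη,
    ⟨gη.coeff.support, gη.coeff, fun a ha => Finsupp.mem_support_iff.mp ha, hηpos,
      fun n => (phiPS_apply n gη)⟩,
    WithBot.unbotD 0 gr.coeff.support.max,
    ⟨gr.coeff.support, gr.coeff, fun a ha => Finsupp.mem_support_iff.mp ha, hrpos,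
      fun n => ?_, rfl⟩, ?_⟩
  · show α n - phiPS n gη * β n = _
    rw [hres n, phiPS_apply]
  · have hl : (WithBot.unbotD 0 gr.coeff.support.max : ℚ) ≤ A * Q ^ (N + 1) := by
      cases h : gr.coeff.support.max with
      | bot => simp; positivity
      | coe x =>
        have hx : x ∈ gr.coeff.support := Finset.mem_of_max h
        simpa using hrbdd x hx
    calc ((WithBot.unbotD 0 gr.coeff.support.max : ℚ) : ℝ) ≤ ((A * Q ^ (N + 1) : ℚ) : ℝ) := by
          exact_mod_cast hl
      _ < t := hbound
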